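/- Let f : ℤ^n → ℝ ∪ {+∞} be an M-convex function with bounded dom f, and let R ⊆ N with ∅ ≠ R ⊊ N. Then for an integer k, there exists x ∈ dom f with x(R) = k if and only if k̲ ≤ k ≤ k̄, where k̲ = min{x(R) : x ∈ dom f} and k̄ = max{x(R) : x ∈ dom f}. -/
import Mathlib


noncomputable section

open scoped BigOperators

/-- The `i`-th unit vector in `ℤ^n`. -/
def chi {n : ℕ} (i : Fin n) : Fin n → ℤ := fun k => if k = i then 1 else 0

/-- The function never takes the value `-∞`, i.e. its codomain is `ℝ ∪ {+∞}`. -/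
def NoBot {n : ℕ} (f : (Fin n → ℤ) → EReal) : Prop := ∀ x, f x ≠ ⊥

/-- M-convexity: nonempty effective domain together with the exchange axiom (M-EXC). -/
def MConvexFn {n : ℕ} (f : (Fin n → ℤ) → EReal) : Prop :=
  (∃ x, f x ≠ ⊤) ∧
  ∀ x y : Fin n → ℤ, f x ≠ ⊤ → f y ≠ ⊤ →
    ∀ i : Fin n, y i < x i →
      ∃ j : Fin n, x j < y j ∧
        f (x - chi i + chi j) + f (y + chi i - chi j) ≤ f x + f y

/-- The slopeZ `f'(x; i, j) = f(x + χ_i - χ_j) - f(x)`. -/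
def slopeZ {n : ℕ} (f : (Fin n → ℤ) → EReal) (x : Fin n → ℤ) (i j : Fin n) : EReal :=
  f (x + chi i - chi j) - f x

/-- `φ(x) = min_{i, j ∈ N} f'(x; i, j)`. -/
def phi {n : ℕ} (f : (Fin n → ℤ) → EReal) (x : Fin n → ℤ) : EReal :=
  ⨅ i : Fin n, ⨅ j : Fin n, slopeZ f x i j

/-- Bounded effective domain. -/
def BddDom {n : ℕ} (f : (Fin n → ℤ) → EReal) : Prop :=
  ∃ C : ℤ, ∀ x : Fin n → ℤ, f x ≠ ⊤ → ∀ i, |x i| ≤ C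

/-- `x(R) = Σ_{i ∈ R} x(i)`. -/
def sumR {n : ℕ} (R : Finset (Fin n)) (x : Fin n → ℤ) : ℤ := ∑ i ∈ R, x i

/-- `k̲ = min { x(R) : x ∈ dom f }`. -/
def kmin {n : ℕ} (f : (Fin n → ℤ) → EReal) (R : Finset (Fin n)) : ℤ :=
  sInf {r : ℤ | ∃ x, f x ≠ ⊤ ∧ sumR R x = r}

/-- `k̄ = max { x(R) : x ∈ dom f }`. -/
def kmax {n : ℕ} (f : (Fin n → ℤ) → EReal) (R : Finset (Fin n)) : ℤ :=
  sSup {r : ℤ | ∃ x, f x ≠ ⊤ ∧ sumR R x = r}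

/-- `M(k)`: the set of minimizers of `f` over `{x ∈ dom f : x(R) = k}`. -/
def Mset {n : ℕ} (f : (Fin n → ℤ) → EReal) (R : Finset (Fin n)) (k : ℤ) :
    Set (Fin n → ℤ) :=
  {x | f x ≠ ⊤ ∧ sumR R x = k ∧ ∀ y : Fin n → ℤ, f y ≠ ⊤ → sumR R y = k → f x ≤ f y}

/-- `z(k) = min { f(x) : x ∈ dom f, x(R) = k }`. -/
def zval {n : ℕ} (f : (Fin n → ℤ) → EReal) (R : Finset (Fin n)) (k : ℤ) : EReal :=
  ⨅ (x : Fin n → ℤ) (_ : f x ≠ ⊤ ∧ sumR R x = k), f x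

/-- `φ^R(x) = min { f'(x; i, j) : i ∈ R, j ∈ N ∖ R }`. -/
def phiR {n : ℕ} (f : (Fin n → ℤ) → EReal) (R : Finset (Fin n)) (x : Fin n → ℤ) : EReal :=
  ⨅ i ∈ R, ⨅ j ∈ Rᶜ, slopeZ f x i j

lemma sum_chi' {n : ℕ} (R : Finset (Fin n)) (i : Fin n) :
    ∑ k ∈ R, chi i k = if i ∈ R then 1 else 0 := by
  simp [chi, Finset.sum_ite_eq']

lemma sumR_move {n : ℕ} (R : Finset (Fin n)) (x : Fin n → ℤ) (i j : Fin n) :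
    sumR R (x + chi i - chi j)
      = sumR R x + (if i ∈ R then 1 else 0) - (if j ∈ R then 1 else 0) := by
  simp only [sumR, Pi.add_apply, Pi.sub_apply, Finset.sum_add_distrib,
    Finset.sum_sub_distrib, sum_chi']

lemma step_lemma {n : ℕ} (f : (Fin n → ℤ) → EReal) (hbot : NoBot f) (hM : MConvexFn f)
    (R : Finset (Fin n)) :
    ∀ d : ℕ, ∀ x y : Fin n → ℤ, f x ≠ ⊤ → f y ≠ ⊤ → sumR R x < sumR R y →
      (∑ i ∈ R, (y i - x i).toNat) = d →
      ∃ z, f z ≠ ⊤ ∧ sumR R z = sumR R x + 1 := by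
  intro d
  induction d using Nat.strong_induction_on with
  | _ d ih =>
  intro x y hx hy hlt hd
  obtain ⟨i, hiR, hi⟩ : ∃ i ∈ R, x i < y i := by
    by_contra h
    push_neg at h
    exact absurd (Finset.sum_le_sum h : sumR R y ≤ sumR R x) (not_le_of_gt hlt)
  obtain ⟨j, hj, hsum⟩ := hM.2 y x hy hx i hi
  have hij : i ≠ j := by
    intro h; rw [h] at hi; exact absurd (hi.trans hj) (lt_irrefl _)
  have htop : f y + f x < ⊤ := EReal.add_lt_top hy hx
  have h1 : f (x + chi i - chi j) ≠ ⊤ := by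
    intro h
    rw [h, EReal.add_top_of_ne_bot (hbot _)] at hsum
    exact absurd (lt_of_le_of_lt hsum htop) (lt_irrefl _)
  set x' := x + chi i - chi j with hx'
  have hx'val : ∀ k, x' k = x k + (if k = i then 1 else 0) - (if k = j then 1 else 0) := by
    intro k; simp [hx', chi]
  by_cases hjR : j ∈ R
  · -- bad case: recurse
    have hsumx' : sumR R x' = sumR R x := by
      rw [hx', sumR_move, if_pos hiR, if_pos hjR]; ring
    have hdec : (∑ k ∈ R, (y k - x' k).toNat) < d := by
      rw [← hd]
      apply Finset.sum_lt_sum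
      · intro k _
        rcases eq_or_ne k i with rfl | hki
        · have : x' k = x k + 1 := by simp [hx', chi, hij]
          rw [this]; omega
        · rcases eq_or_ne k j with rfl | hkj
          · have : x' k = x k - 1 := by simp [hx', chi, Ne.symm hij]
            rw [this]; omega
          · have : x' k = x k := by simp [hx', chi, hki, hkj]
            rw [this]
      · refine ⟨i, hiR, ?_⟩
        have : x' i = x i + 1 := by simp [hx', chi, hij]
        rw [this]; omega
    obtain ⟨z, hz1, hz2⟩ := ih _ hdec x' y h1 hy (by rw [hsumx']; exact hlt) rfl
    exact ⟨z, hz1, by rw [hz2, hsumx']⟩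
  · exact ⟨x', h1, by rw [hx', sumR_move, if_pos hiR, if_neg hjR]; ring⟩

/-- Feasibility of the constrained problem: there exists `x ∈ dom f` with `x(R) = k`
iff `k̲ ≤ k ≤ k̄`. -/
theorem statement11 {n : ℕ} (hn : 1 ≤ n) (f : (Fin n → ℤ) → EReal)
    (hbot : NoBot f) (hM : MConvexFn f) (hbdd : BddDom f)
    (R : Finset (Fin n)) (hR : R.Nonempty) (hRp : R ≠ Finset.univ)
    (k : ℤ) :
    (∃ x : Fin n → ℤ, f x ≠ ⊤ ∧ sumR R x = k) ↔ kmin f R ≤ k ∧ k ≤ kmax f R := by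
  set S : Set ℤ := {r : ℤ | ∃ x, f x ≠ ⊤ ∧ sumR R x = r} with hS
  obtain ⟨x0, hx0⟩ := hM.1
  have hSne : S.Nonempty := ⟨sumR R x0, x0, hx0, rfl⟩
  obtain ⟨C, hC⟩ := hbdd
  have habove : BddAbove S := by
    refine ⟨R.card * C, ?_⟩
    rintro r ⟨x, hx, rfl⟩
    calc sumR R x ≤ ∑ _i ∈ R, C :=
          Finset.sum_le_sum fun i _ => (le_abs_self _).trans (hC x hx i)
      _ = R.card * C := by rw [Finset.sum_const]; simp [mul_comm]
  have hbelow : BddBelow S := by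
    refine ⟨-(R.card * C), ?_⟩
    rintro r ⟨x, hx, rfl⟩
    have : ∑ _i ∈ R, (-C) ≤ sumR R x :=
      Finset.sum_le_sum fun i _ => neg_le_of_abs_le (hC x hx i)
    calc -(R.card * C) = ∑ _i ∈ R, (-C) := by rw [Finset.sum_const]; simp [mul_comm]
      _ ≤ sumR R x := this
  have hminS : kmin f R ∈ S := Int.csInf_mem hSne hbelow
  have hmaxS : kmax f R ∈ S := Int.csSup_mem hSne habove
  constructor
  · rintro ⟨x, hx, hk⟩
    have hkS : k ∈ S := ⟨x, hx, hk⟩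
    exact ⟨csInf_le hbelow hkS, le_csSup habove hkS⟩
  · rintro ⟨hk1, hk2⟩
    have key : ∀ m : ℕ, kmin f R + m ≤ kmax f R → (kmin f R + m) ∈ S := by
      intro m
      induction m with
      | zero => intro _; simpa using hminS
      | succ m ihm =>
        intro hle
        have hle' : kmin f R + m ≤ kmax f R := by push_cast at hle ⊢; omega
        obtain ⟨x, hx, hxs⟩ := ihm hle'
        obtain ⟨y, hy, hys⟩ := hmaxS
        have hlt : sumR R x < sumR R y := by
          rw [hxs, hys]; push_cast at hle; omega
        obtain ⟨z, hz1, hz2⟩ := step_lemma f hbot hM R _ x y hx hy hlt rfl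
        refine ⟨z, hz1, ?_⟩
        rw [hz2, hxs]; push_cast; ring
    have := key (k - kmin f R).toNat (by omega)
    rwa [show kmin f R + ((k - kmin f R).toNat : ℤ) = k by omega] at this
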